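/- (Box uncertainty: optimal solution.) For box uncertainty with greatest element d̂, let x̲ be the earliest schedule of G(p+d̂), x̄ the latest schedule of G(p) with x̄_t = M, H* = {i ∈ J : x̲_i ≤ x̄_i}, and x_i = min(x̲_i, x̄_i) for all i. Then x is a schedule of G(p) with x_t ≤ M and H* is x-anchored; hence (x, H*) is an optimal solution of (AnchRob) for any nonnegative weights. -/

import Mathlib

/-- Length of a path (given as a list of vertices) when each arc `(i,j)` has
length `q i` (the duration of its source vertex). -/
def PathLen {V : Type*} (q : V → ℝ) (l : List V) : ℝ := (l.dropLast.map q).sum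

/-- `l` is a path from `i` to `j` in the digraph with arc relation `A`. -/
def IsPath {V : Type*} (A : V → V → Prop) (i j : V) (l : List V) : Prop :=
  l ≠ [] ∧ l.Chain' A ∧ l.head? = some i ∧ l.getLast? = some j

/-- Length of a path for arc-indexed weights `w`. -/
def LenW {V : Type*} (w : V → V → ℝ) : List V → ℝ
  | a :: b :: l => w a b + LenW w (b :: l)
  | _ => 0

/-- `x` is a schedule of the precedence graph `(V, A)` with durations `q` and source `s`. -/
def Sched {V : Type*} (A : V → V → Prop) (s : V) (q x : V → ℝ) : Prop :=
  x s = 0 ∧ (∀ v, 0 ≤ x v) ∧ ∀ i j, A i j → q i ≤ x j - x i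

/-- `H` is `x`-anchored for the uncertainty set `Δ`. -/
def XAnchored {V : Type*} (A : V → V → Prop) (s : V) (p : V → ℝ)
    (Δ : Set (V → ℝ)) (x : V → ℝ) (H : Set V) : Prop :=
  ∀ δ ∈ Δ, ∃ y, Sched A s (fun v => p v + δ v) y ∧ ∀ i ∈ H, y i = x i

/-- `L` is the longest `i`–`j` path length under durations `q`. -/
def IsLongest {V : Type*} (A : V → V → Prop) (q : V → ℝ) (i j : V) (L : ℝ) : Prop :=
  IsGreatest {r | ∃ l, IsPath A i j l ∧ PathLen q l = r} L

/-- `L` is the worst-case longest `i`–`j` path length over the uncertainty set `Δ`. -/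
def IsWorst {V : Type*} (A : V → V → Prop) (p : V → ℝ) (Δ : Set (V → ℝ))
    (i j : V) (L : ℝ) : Prop :=
  IsGreatest {r | ∃ δ ∈ Δ, ∃ l, IsPath A i j l ∧ PathLen (fun v => p v + δ v) l = r} L

lemma pathLen_nonneg {V : Type*} {q : V → ℝ} (hq : ∀ v, 0 ≤ q v) (l : List V) :
    0 ≤ PathLen q l := by
  apply List.sum_nonneg
  intro r hr
  obtain ⟨a, _, rfl⟩ := List.mem_map.1 hr
  exact hq a

lemma sched_path_bound {V : Type*} {A : V → V → Prop} {s : V} {q y : V → ℝ}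
    (hy : Sched A s q y) :
    ∀ (l : List V) {i j : V}, IsPath A i j l → PathLen q l ≤ y j - y i := by
  intro l
  induction l with
  | nil => intro i j hl; exact absurd rfl hl.1
  | cons a m ih =>
    intro i j hl
    obtain ⟨-, hc, hh, hg⟩ := hl
    have hia : i = a := by simpa using hh.symm
    subst hia
    cases m with
    | nil =>
      have : j = i := by simpa using hg.symm
      subst this
      simp [PathLen]
    | cons b m' =>
      obtain ⟨hab, hc'⟩ := List.isChain_cons_cons.1 hc
      have h1 : q i ≤ y b - y i := hy.2.2 _ _ hab
      have h2 : PathLen q (b :: m') ≤ y j - y b :=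
        ih ⟨by simp, hc', rfl, by simpa using hg⟩
      have h3 : PathLen q (i :: b :: m') = q i + PathLen q (b :: m') := by
        simp [PathLen]
      linarith

lemma chain'_transGen {V : Type*} {A : V → V → Prop} :
    ∀ (l : List V) {i j : V}, l.Chain' A → l.head? = some i → l.getLast? = some j →
      2 ≤ l.length → Relation.TransGen A i j := by
  intro l
  induction l with
  | nil => intro i j _ h; simp at h
  | cons a m ih =>
    intro i j hc hh hg hlen
    have hia : i = a := by simpa using hh.symm
    subst hia
    cases m with
    | nil => simp at hlen
    | cons b m' =>
      obtain ⟨hab, hc'⟩ := List.isChain_cons_cons.1 hc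
      cases m' with
      | nil =>
        have : j = b := by simpa using hg.symm
        subst this
        exact Relation.TransGen.single hab
      | cons c m'' =>
        exact Relation.TransGen.head hab
          (ih hc' rfl (by simpa using hg) (by simp))

lemma path_self_eq {V : Type*} {A : V → V → Prop}
    (hacyc : ∀ v, ¬ Relation.TransGen A v v)
    {i : V} {l : List V} (hl : IsPath A i i l) : l = [i] := by
  obtain ⟨hne, hc, hh, hg⟩ := hl
  cases l with
  | nil => exact absurd rfl hne
  | cons a m =>
    have hia : i = a := by simpa using hh.symm
    subst hia
    cases m with
    | nil => rfl
    | cons b m' =>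
      exact absurd (chain'_transGen _ hc rfl hg (by simp)) (hacyc i)

lemma isPath_append {V : Type*} {A : V → V → Prop} {s i j : V} {l : List V}
    (hl : IsPath A s i l) (hij : A i j) (q : V → ℝ) :
    IsPath A s j (l ++ [j]) ∧ PathLen q (l ++ [j]) = PathLen q l + q i := by
  obtain ⟨hne, hc, hh, hg⟩ := hl
  have hgl : l.getLast hne = i := by
    have := List.getLast?_eq_getLast hne
    rw [this] at hg; exact (Option.some_inj.1 hg)
  constructor
  · refine ⟨by simp, ?_, ?_, ?_⟩
    · rw [List.Chain', List.isChain_append]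
      refine ⟨hc, List.isChain_singleton j, ?_⟩
      intro x hx y hy
      rw [hg] at hx
      simp at hx hy
      rw [← hx, ← hy]; exact hij
    · rw [List.head?_append_of_ne_nil _ hne]; exact hh
    · simp
  · have hdrop : (l ++ [j]).dropLast = l := by simp
    rw [PathLen, hdrop]
    conv_lhs => rw [← List.dropLast_append_getLast hne]
    simp [PathLen, hgl]

lemma isPath_cons {V : Type*} {A : V → V → Prop} {i j t : V} {l : List V}
    (hl : IsPath A j t l) (hij : A i j) (q : V → ℝ) :
    IsPath A i t (i :: l) ∧ PathLen q (i :: l) = q i + PathLen q l := by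
  obtain ⟨hne, hc, hh, hg⟩ := hl
  cases l with
  | nil => exact absurd rfl hne
  | cons b m =>
    have hjb : j = b := by simpa using hh.symm
    subst hjb
    refine ⟨⟨by simp, List.isChain_cons_cons.2 ⟨hij, hc⟩, rfl, by simpa using hg⟩, ?_⟩
    simp [PathLen]

lemma transGen_path {V : Type*} {A : V → V → Prop} {i j : V}
    (h : Relation.TransGen A i j) : ∃ l, IsPath A i j l ∧ 2 ≤ l.length := by
  induction h with
  | single hab => exact ⟨[i, _], ⟨by simp, List.isChain_pair.2 hab, rfl, rfl⟩, by simp⟩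
  | tail hbc hcd ih =>
    obtain ⟨l, hl, hlen⟩ := ih
    refine ⟨l ++ [_], (isPath_append hl hcd (fun _ => 0)).1, by simp; omega⟩

lemma isPath_trans {V : Type*} {A : V → V → Prop} {s v t : V} {m l : List V} (q : V → ℝ)
    (hm : IsPath A s v m) (hm2 : 2 ≤ m.length) (hl : IsPath A v t l) :
    IsPath A s t (m.dropLast ++ l) ∧
    PathLen q (m.dropLast ++ l) = PathLen q m + PathLen q l := by
  obtain ⟨hmne, hmc, hmh, hmg⟩ := hm
  obtain ⟨hlne, hlc, hlh, hlg⟩ := hl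
  have hgm : m.getLast hmne = v := by
    have := List.getLast?_eq_getLast hmne
    rw [this] at hmg; exact Option.some_inj.1 hmg
  have hdne : m.dropLast ≠ [] := by
    intro h
    have := List.length_dropLast (xs := m)
    rw [h] at this; simp at this; omega
  have hmeq : m.dropLast ++ [v] = m := by
    conv_rhs => rw [← List.dropLast_append_getLast hmne]
    rw [hgm]
  have hcd : m.dropLast.Chain' A ∧ ∀ x ∈ m.dropLast.getLast?, A x v := by
    have := hmc
    rw [← hmeq, List.Chain', List.isChain_append] at this
    exact ⟨this.1, fun x hx => this.2.2 x hx v rfl⟩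
  constructor
  · refine ⟨by simp [hlne], ?_, ?_, ?_⟩
    · rw [List.Chain', List.isChain_append]
      refine ⟨hcd.1, hlc, fun x hx y hy => ?_⟩
      rw [hlh] at hy
      have := hcd.2 x hx
      simp at hy; rw [← hy]; exact this
    · rw [List.head?_append_of_ne_nil _ hdne]
      rw [← hmh, ← hmeq, List.head?_append_of_ne_nil _ hdne]
      simp
    · rw [List.getLast?_append_of_ne_nil _ hlne]; exact hlg
  · rw [PathLen, List.dropLast_append_of_ne_nil hlne, List.map_append, List.sum_append]
    rfl

/-- box uncertainty, optimal solution: with `x̲` the earliest schedule of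
`G(p+d̂)`, `x̄` the latest schedule of `G(p)` with makespan `M`, `H* = {i : x̲_i ≤ x̄_i}`
and `x = min(x̲, x̄)`, the pair `(x, H*)` is a feasible solution of (AnchRob) and it is
optimal for any nonnegative anchoring weights. -/
theorem box_uncertainty_optimal_solution
    {V : Type*} [Fintype V] (A : V → V → Prop) (s t : V)
    (p dhat : V → ℝ) (hp : ∀ v, 0 ≤ p v) (hdhat : ∀ v, 0 ≤ dhat v)
    (hps : p s = 0) (hds : dhat s = 0) (hdt : dhat t = 0)
    (hacyc : ∀ v, ¬ Relation.TransGen A v v)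
    (hsrc : ∀ v, v ≠ s → Relation.TransGen A s v)
    (hsink : ∀ v, v ≠ t → Relation.TransGen A v t)
    (L0t : V → ℝ) (hL0t : ∀ j, IsLongest A p j t (L0t j))
    (xlo : V → ℝ) (hxlo : ∀ j, IsLongest A (fun v => p v + dhat v) s j (xlo j))
    (M : ℝ) (hM : L0t s ≤ M)
    (x : V → ℝ) (hx : ∀ v, x v = min (xlo v) (M - L0t v))
    (Hstar : Finset V)
    (hHstar : ∀ j, j ∈ Hstar ↔ j ≠ s ∧ j ≠ t ∧ xlo j ≤ M - L0t j)
    (w : V → ℝ) (hw : ∀ v, 0 ≤ w v) :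
    Sched A s p x ∧ x t ≤ M ∧
    XAnchored A s p {δ | ∀ v, 0 ≤ δ v ∧ δ v ≤ dhat v} x ↑Hstar ∧
    ∀ (H : Finset V) (x' : V → ℝ), s ∉ H → t ∉ H →
      Sched A s p x' → x' t ≤ M →
      XAnchored A s p {δ | ∀ v, 0 ≤ δ v ∧ δ v ≤ dhat v} x' ↑H →
      ∑ i ∈ H, w i ≤ ∑ i ∈ Hstar, w i := by
  have hq0 : ∀ v, 0 ≤ p v + dhat v := fun v => add_nonneg (hp v) (hdhat v)
  -- nonnegativity of path values
  have hxlo0 : ∀ v, 0 ≤ xlo v := by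
    intro v
    obtain ⟨l, hl, hlen⟩ := (hxlo v).1
    rw [← hlen]; exact pathLen_nonneg hq0 l
  have hL00 : ∀ v, 0 ≤ L0t v := by
    intro v
    obtain ⟨l, hl, hlen⟩ := (hL0t v).1
    rw [← hlen]; exact pathLen_nonneg hp l
  -- xlo s = 0
  have hxlos : xlo s = 0 := by
    obtain ⟨l, hl, hlen⟩ := (hxlo s).1
    rw [path_self_eq hacyc hl] at hlen
    rw [← hlen]; simp [PathLen]
  -- L0t t = 0
  have hL0tt : L0t t = 0 := by
    obtain ⟨l, hl, hlen⟩ := (hL0t t).1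
    rw [path_self_eq hacyc hl] at hlen
    rw [← hlen]; simp [PathLen]
  -- arc inequalities
  have harc_xlo : ∀ i j, A i j → xlo i + (p i + dhat i) ≤ xlo j := by
    intro i j hij
    obtain ⟨l, hl, hlen⟩ := (hxlo i).1
    obtain ⟨hl', hlen'⟩ := isPath_append hl hij (fun v => p v + dhat v)
    have : PathLen (fun v => p v + dhat v) (l ++ [j]) ≤ xlo j := (hxlo j).2 ⟨_, hl', rfl⟩
    rw [hlen', hlen] at this; exact this
  have harc_L0 : ∀ i j, A i j → p i + L0t j ≤ L0t i := by
    intro i j hij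
    obtain ⟨l, hl, hlen⟩ := (hL0t j).1
    obtain ⟨hl', hlen'⟩ := isPath_cons hl hij p
    have : PathLen p (i :: l) ≤ L0t i := (hL0t i).2 ⟨_, hl', rfl⟩
    rw [hlen', hlen] at this; exact this
  -- L0t v ≤ L0t s
  have hL0le : ∀ v, L0t v ≤ L0t s := by
    intro v
    by_cases hvs : v = s
    · subst hvs
      exact le_rfl
    · obtain ⟨m, hm, hmlen⟩ := transGen_path (hsrc v hvs)
      obtain ⟨l, hl, hlen⟩ := (hL0t v).1
      obtain ⟨hl', hlen'⟩ := isPath_trans p hm hmlen hl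
      have h1 : PathLen p (m.dropLast ++ l) ≤ L0t s := (hL0t s).2 ⟨_, hl', rfl⟩
      have h2 : 0 ≤ PathLen p m := pathLen_nonneg hp m
      rw [hlen'] at h1; linarith
  have hxs : x s = 0 := by
    rw [hx s, hxlos]
    exact min_eq_left (by linarith)
  have hsched : Sched A s p x := by
    refine ⟨hxs, ?_, ?_⟩
    · intro v
      rw [hx v]
      exact le_min (hxlo0 v) (by linarith [hL0le v])
    · intro i j hij
      rw [hx i, hx j]
      have h1 := harc_xlo i j hij
      have h2 := harc_L0 i j hij
      have h3 := min_le_left (xlo i) (M - L0t i)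
      have h4 := min_le_right (xlo i) (M - L0t i)
      have h5 : min (xlo i) (M - L0t i) + p i ≤ min (xlo j) (M - L0t j) :=
        le_min (by linarith [hdhat i]) (by linarith)
      linarith
  refine ⟨hsched, ?_, ?_, ?_⟩
  · rw [hx t, hL0tt]
    calc min (xlo t) (M - 0) ≤ M - 0 := min_le_right _ _
      _ = M := by ring
  · -- XAnchored with y = xlo
    intro δ hδ
    refine ⟨xlo, ⟨hxlos, hxlo0, fun i j hij => ?_⟩, fun i hi => ?_⟩
    · have := harc_xlo i j hij
      have := (hδ i).2
      show p i + δ i ≤ xlo j - xlo i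
      linarith
    · rw [hx i]
      have hm := ((hHstar i).1 hi).2.2
      exact (min_eq_left hm).symm
  · intro H x' hsH htH hx' hxt' hanch
    have hsub : H ⊆ Hstar := by
      intro j hj
      rw [hHstar]
      refine ⟨fun h => hsH (h ▸ hj), fun h => htH (h ▸ hj), ?_⟩
      obtain ⟨y, hy, hyx⟩ := hanch dhat (fun v => ⟨hdhat v, le_refl _⟩)
      have h1 : xlo j ≤ y j := by
        obtain ⟨l, hl, hlen⟩ := (hxlo j).1
        have := sched_path_bound hy l hl
        rw [hy.1] at this
        linarith [hlen ▸ this]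
      have h2 : L0t j ≤ x' t - x' j := by
        obtain ⟨l, hl, hlen⟩ := (hL0t j).1
        have := sched_path_bound hx' l hl
        linarith [hlen ▸ this]
      have h3 := hyx j hj
      linarith
    exact Finset.sum_le_sum_of_subset_of_nonneg hsub (fun i _ _ => hw i)
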